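/- The backward (incoming) transition dual update monotonically increases the dual function: let v ∈ V_det with In(v) and Out(v) nonempty and let λ ∈ Λ. Let x* be a minimizer of ⟨θ^λ_v, ·⟩ over {x ∈ X_v : x_det = 1}, let y* be a minimizer of ⟨θ^λ_v, ·⟩ over {x ∈ X_v : x_det = 1, x_in ≠ x*_in, x_out ≠ x*_out}, and set B_in = min{0, ½[⟨θ^λ_v, x*⟩ + ⟨θ^λ_v, (1, y*_in, x*_out)⟩]} (the state (1, y*_in, x*_out) lies in X_v). Define the update μ ∈ Λ by: μ(e) = − min{⟨θ^λ_v, x⟩ : x ∈ X_v, x_in(e) = 1} + B_in for every move edge e ∈ In(v); μ_v(e) = − min{⟨θ^λ_v, x⟩ : x ∈ X_v, x_in(e) = 1} + B_in for every division edge e ∈ In(v) in which v appears as a target; all other components of μ are zero. Then D(λ) ≤ D(λ + μ). -/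

import Mathlib

open Finset

/-- Transition edges: a move `u→v` is `Sum.inl (u, v)`, a division `u→(v, w)` is
`Sum.inr (u, v, w)`. -/
abbrev Edge (Vdet : Type*) := (Vdet × Vdet) ⊕ (Vdet × Vdet × Vdet)

/-- A detection state `(x_det, x_in, x_out)`: the activation flag is a `Bool`, and each
`{0,1}`-vector is identified with the finite set of coordinates equal to `1`. -/
abbrev DetS (Vdet : Type*) := Bool × Finset (Edge Vdet) × Finset (Edge Vdet)

/-- A tracking decomposition: detection nodes `Vdet`, conflict nodes `Vconf`,
move edges (with distinct endpoints), division edges (with pairwise distinct nodes)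
and conflict edges. -/
structure Tracking (Vdet Vconf : Type*) [Fintype Vdet] [DecidableEq Vdet]
    [Fintype Vconf] [DecidableEq Vconf] where
  Emove : Finset (Vdet × Vdet)
  Ediv : Finset (Vdet × Vdet × Vdet)
  Econf : Finset (Vdet × Vconf)
  move_ne : ∀ e ∈ Emove, e.1 ≠ e.2
  div_ne : ∀ e ∈ Ediv, e.1 ≠ e.2.1 ∧ e.1 ≠ e.2.2 ∧ e.2.1 ≠ e.2.2

/-- A cost vector `θ`. -/
structure Cost (Vdet Vconf : Type*) where
  det : Vdet → ℝ
  inn : Vdet → Edge Vdet → ℝ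
  out : Vdet → Edge Vdet → ℝ
  conf : Vconf → Vdet → ℝ

/-- A reparametrization `λ ∈ Λ`: one real per move edge, a pair of reals
`(λ_v(e), λ_w(e))` per division edge `e = u→(v,w)`, and one real per conflict edge. -/
abbrev Repa (Vdet Vconf : Type*) : Type _ :=
  ((Vdet × Vdet) → ℝ) × ((Vdet × Vdet × Vdet) → ℝ × ℝ) × ((Vdet × Vconf) → ℝ)

variable {Vdet Vconf : Type*} [Fintype Vdet] [DecidableEq Vdet]
  [Fintype Vconf] [DecidableEq Vconf]

namespace Tracking

variable (T : Tracking Vdet Vconf)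

/-- The set `In(u)` of incoming transition edges of a detection node `u`. -/
def In (u : Vdet) : Finset (Edge Vdet) :=
  (T.Emove.filter (fun m => m.2 = u)).image Sum.inl ∪
    (T.Ediv.filter (fun d => d.2.1 = u ∨ d.2.2 = u)).image Sum.inr

/-- The set `Out(u)` of outgoing transition edges of a detection node `u`. -/
def Out (u : Vdet) : Finset (Edge Vdet) :=
  (T.Emove.filter (fun m => m.1 = u)).image Sum.inl ∪
    (T.Ediv.filter (fun d => d.1 = u)).image Sum.inr

/-- The set `conf(u)` of conflict edges incident to a detection node `u`. -/
def confSet (u : Vdet) : Finset (Vdet × Vconf) := T.Econf.filter (fun e => e.1 = u)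

/-- The detection nodes `u ∈ c` of a conflict node `c`. -/
def membersOf (c : Vconf) : Finset Vdet := Finset.univ.filter (fun v => (v, c) ∈ T.Econf)

/-- The state space `X_u` of a detection node. -/
def XDet (u : Vdet) : Finset (DetS Vdet) :=
  Finset.univ.filter (fun s =>
    s.2.1 ⊆ T.In u ∧ s.2.2 ⊆ T.Out u ∧
    s.2.1.card ≤ (if s.1 then 1 else 0) ∧ s.2.2.card ≤ (if s.1 then 1 else 0))

lemma zero_mem_XDet (u : Vdet) : ((false, ∅, ∅) : DetS Vdet) ∈ T.XDet u := by
  simp [XDet]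

lemma XDet_nonempty (u : Vdet) : (T.XDet u).Nonempty := ⟨_, T.zero_mem_XDet u⟩

/-- The state space `X_c` of a conflict node. -/
def XConf (c : Vconf) : Finset (Finset Vdet) :=
  Finset.univ.filter (fun s => (∀ v ∈ s, (v, c) ∈ T.Econf) ∧ s.card ≤ 1)

lemma empty_mem_XConf (c : Vconf) : (∅ : Finset Vdet) ∈ T.XConf c := by
  simp [XConf]

lemma XConf_nonempty (c : Vconf) : (T.XConf c).Nonempty := ⟨_, T.empty_mem_XConf c⟩

end Tracking

/-- The cost `⟨θ_u, x_u⟩` of a detection state. -/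
def detCost (θ : Cost Vdet Vconf) (u : Vdet) (s : DetS Vdet) : ℝ :=
  (if s.1 then θ.det u else 0) + ∑ e ∈ s.2.1, θ.inn u e + ∑ e ∈ s.2.2, θ.out u e

/-- The cost `⟨θ_c, x_c⟩` of a conflict state. -/
def confCost (θ : Cost Vdet Vconf) (c : Vconf) (s : Finset Vdet) : ℝ :=
  ∑ v ∈ s, θ.conf c v

/-- The energy `E(θ, x)`. -/
def energy (θ : Cost Vdet Vconf) (x : Vdet → DetS Vdet) (y : Vconf → Finset Vdet) : ℝ :=
  ∑ u, detCost θ u (x u) + ∑ c, confCost θ c (y c)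

namespace Tracking

variable (T : Tracking Vdet Vconf)

/-- The coupling constraints relating the states of the nodes. -/
def Coupled (x : Vdet → DetS Vdet) (y : Vconf → Finset Vdet) : Prop :=
  (∀ m ∈ T.Emove, (Sum.inl m ∈ (x m.1).2.2 ↔ Sum.inl m ∈ (x m.2).2.1)) ∧
  (∀ d ∈ T.Ediv, (Sum.inr d ∈ (x d.1).2.2 ↔ Sum.inr d ∈ (x d.2.1).2.1) ∧
      (Sum.inr d ∈ (x d.1).2.2 ↔ Sum.inr d ∈ (x d.2.2).2.1)) ∧
  (∀ e ∈ T.Econf, ((x e.1).1 = true ↔ e.1 ∈ y e.2))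

/-- A feasible assignment `x ∈ X`: valid local states satisfying all coupling constraints. -/
def Feasible (x : Vdet → DetS Vdet) (y : Vconf → Finset Vdet) : Prop :=
  (∀ u, x u ∈ T.XDet u) ∧ (∀ c, y c ∈ T.XConf c) ∧ T.Coupled x y

/-- The reparametrized costs `θ^λ`. -/
def repaCost (θ : Cost Vdet Vconf) (l : Repa Vdet Vconf) : Cost Vdet Vconf where
  det u := θ.det u - ∑ e ∈ T.confSet u, l.2.2 e
  inn u e := θ.inn u e +
    (match e with
      | Sum.inl m => l.1 m
      | Sum.inr d =>
          (if d.2.1 = u then (l.2.1 d).1 else 0) + (if d.2.2 = u then (l.2.1 d).2 else 0))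
  out u e := θ.out u e -
    (match e with
      | Sum.inl m => l.1 m
      | Sum.inr d => (l.2.1 d).1 + (l.2.1 d).2)
  conf c u := θ.conf c u + l.2.2 (u, c)

/-- The dual function `D(λ)`. -/
def D (θ : Cost Vdet Vconf) (l : Repa Vdet Vconf) : ℝ :=
  ∑ u, (T.XDet u).inf' (T.XDet_nonempty u) (detCost (T.repaCost θ l) u) +
    ∑ c, (T.XConf c).inf' (T.XConf_nonempty c) (confCost (T.repaCost θ l) c)

/-- The states of `X_u` with active detection variable, `{x ∈ X_u : x_det = 1}`. -/
def XDet1 (u : Vdet) : Finset (DetS Vdet) := (T.XDet u).filter (fun s => s.1 = true)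

lemma one_mem_XDet1 (u : Vdet) : ((true, ∅, ∅) : DetS Vdet) ∈ T.XDet1 u := by
  simp [XDet1, XDet]

lemma XDet1_nonempty (u : Vdet) : (T.XDet1 u).Nonempty := ⟨_, T.one_mem_XDet1 u⟩

/-- The states of `X_u` with a given active outgoing edge, `{x ∈ X_u : x_out(e) = 1}`. -/
def XDetOut (u : Vdet) (e : Edge Vdet) : Finset (DetS Vdet) :=
  (T.XDet u).filter (fun s => e ∈ s.2.2)

lemma XDetOut_nonempty (u : Vdet) (e : Edge Vdet) (he : e ∈ T.Out u) :
    (T.XDetOut u e).Nonempty :=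
  ⟨(true, ∅, {e}), by simp [XDetOut, XDet, Finset.singleton_subset_iff, he]⟩

/-- The states of `X_u` with a given active incoming edge, `{x ∈ X_u : x_in(e) = 1}`. -/
def XDetIn (u : Vdet) (e : Edge Vdet) : Finset (DetS Vdet) :=
  (T.XDet u).filter (fun s => e ∈ s.2.1)

lemma XDetIn_nonempty (u : Vdet) (e : Edge Vdet) (he : e ∈ T.In u) :
    (T.XDetIn u e).Nonempty :=
  ⟨(true, {e}, ∅), by simp [XDetIn, XDet, Finset.singleton_subset_iff, he]⟩

/-- `min{⟨θ_u, x⟩ : x ∈ X_u, x_out(e) = 1}` (by convention `0` if `e ∉ Out(u)`). -/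
def minOutOn (θ : Cost Vdet Vconf) (u : Vdet) (e : Edge Vdet) : ℝ :=
  if h : e ∈ T.Out u then (T.XDetOut u e).inf' (T.XDetOut_nonempty u e h) (detCost θ u) else 0

/-- `min{⟨θ_u, x⟩ : x ∈ X_u, x_in(e) = 1}` (by convention `0` if `e ∉ In(u)`). -/
def minInOn (θ : Cost Vdet Vconf) (u : Vdet) (e : Edge Vdet) : ℝ :=
  if h : e ∈ T.In u then (T.XDetIn u e).inf' (T.XDetIn_nonempty u e h) (detCost θ u) else 0

end Tracking
set_option linter.unusedSectionVars false
section Helpers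
open Tracking
variable {Vdet Vconf : Type*} [Fintype Vdet] [DecidableEq Vdet] [Fintype Vconf] [DecidableEq Vconf]
variable (T : Tracking Vdet Vconf)

lemma card_le_one_cases {α : Type*} (s : Finset α) (h : s.card ≤ 1) : s = ∅ ∨ ∃ a, s = {a} := by
  rcases s.eq_empty_or_nonempty with h0 | ⟨a, ha⟩
  · exact Or.inl h0
  · exact Or.inr ⟨a, Finset.eq_singleton_iff_unique_mem.mpr
      ⟨ha, fun b hb => Finset.card_le_one.mp h b hb a ha⟩⟩

lemma mem_XDet_iff (u : Vdet) (s : DetS Vdet) : s ∈ T.XDet u ↔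
    s.2.1 ⊆ T.In u ∧ s.2.2 ⊆ T.Out u ∧
      s.2.1.card ≤ (if s.1 then 1 else 0) ∧ s.2.2.card ≤ (if s.1 then 1 else 0) := by
  simp [Tracking.XDet]

lemma mem_XDet1_iff (u : Vdet) (s : DetS Vdet) : s ∈ T.XDet1 u ↔
    s ∈ T.XDet u ∧ s.1 = true := by
  simp [Tracking.XDet1]

lemma mem_In_inl (u : Vdet) (m : Vdet × Vdet) :
    Sum.inl m ∈ T.In u ↔ m ∈ T.Emove ∧ m.2 = u := by
  simp [Tracking.In]

lemma mem_In_inr (u : Vdet) (d : Vdet × Vdet × Vdet) :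
    Sum.inr d ∈ T.In u ↔ d ∈ T.Ediv ∧ (d.2.1 = u ∨ d.2.2 = u) := by
  simp [Tracking.In]

lemma mem_Out_inl (u : Vdet) (m : Vdet × Vdet) :
    Sum.inl m ∈ T.Out u ↔ m ∈ T.Emove ∧ m.1 = u := by
  simp [Tracking.Out]

lemma mem_Out_inr (u : Vdet) (d : Vdet × Vdet × Vdet) :
    Sum.inr d ∈ T.Out u ↔ d ∈ T.Ediv ∧ d.1 = u := by
  simp [Tracking.Out]

lemma not_out_of_in (v : Vdet) (e : Edge Vdet) (he : e ∈ T.In v) : e ∉ T.Out v := by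
  intro ho
  rcases e with m | d
  · rw [mem_In_inl] at he; rw [mem_Out_inl] at ho
    exact T.move_ne m he.1 (ho.2.trans he.2.symm)
  · rw [mem_In_inr] at he; rw [mem_Out_inr] at ho
    obtain ⟨h1, h2, h3⟩ := T.div_ne d he.1
    rcases he.2 with h | h
    · exact h1 (ho.2.trans h.symm)
    · exact h2 (ho.2.trans h.symm)

lemma detCost_true (θ : Cost Vdet Vconf) (u : Vdet) (a b : Finset (Edge Vdet)) :
    detCost θ u (true, a, b) = θ.det u + ∑ e ∈ a, θ.inn u e + ∑ e ∈ b, θ.out u e := by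
  simp [detCost]

end Helpers
set_option linter.unusedSectionVars false
section Helpers2
open Tracking
variable {Vdet Vconf : Type*} [Fintype Vdet] [DecidableEq Vdet] [Fintype Vconf] [DecidableEq Vconf]
variable (T : Tracking Vdet Vconf)

/-- In-edge increment of a reparametrization at node `u`. -/
def muIn (μ : Repa Vdet Vconf) (u : Vdet) : Edge Vdet → ℝ
  | Sum.inl m => μ.1 m
  | Sum.inr d => (if d.2.1 = u then (μ.2.1 d).1 else 0) + (if d.2.2 = u then (μ.2.1 d).2 else 0)

/-- Out-edge increment of a reparametrization. -/
def muOut (μ : Repa Vdet Vconf) : Edge Vdet → ℝ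
  | Sum.inl m => μ.1 m
  | Sum.inr d => (μ.2.1 d).1 + (μ.2.1 d).2

lemma detCost_repa_add (θ : Cost Vdet Vconf) (l μ : Repa Vdet Vconf) (hconf : μ.2.2 = 0)
    (u : Vdet) (s : DetS Vdet) :
    detCost (T.repaCost θ (l + μ)) u s = detCost (T.repaCost θ l) u s
      + ∑ e ∈ s.2.1, muIn μ u e - ∑ e ∈ s.2.2, muOut μ e := by
  have hdet : (T.repaCost θ (l + μ)).det u = (T.repaCost θ l).det u := by
    simp [Tracking.repaCost, hconf]
  have hinn : ∀ e, (T.repaCost θ (l + μ)).inn u e = (T.repaCost θ l).inn u e + muIn μ u e := by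
    rintro (m | d)
    · simp [Tracking.repaCost, muIn, Prod.add_def]; ring
    · simp [Tracking.repaCost, muIn, Prod.add_def]; split_ifs <;> ring
  have hout : ∀ e, (T.repaCost θ (l + μ)).out u e = (T.repaCost θ l).out u e - muOut μ e := by
    rintro (m | d) <;> (simp [Tracking.repaCost, muOut, Prod.add_def]; ring)
  simp only [detCost, hdet, hinn, hout, Finset.sum_add_distrib, Finset.sum_sub_distrib]
  ring

lemma confCost_repa_add (θ : Cost Vdet Vconf) (l μ : Repa Vdet Vconf) (hconf : μ.2.2 = 0)
    (c : Vconf) (s : Finset Vdet) :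
    confCost (T.repaCost θ (l + μ)) c s = confCost (T.repaCost θ l) c s := by
  simp [confCost, Tracking.repaCost, hconf]

end Helpers2

/-- The backward (incoming) transition dual update monotonically increases
the dual function: with `x*` a minimizer over `{x ∈ X_v : x_det = 1}`, `y*` a minimizer over
`{x ∈ X_v : x_det = 1, x_in ≠ x*_in, x_out ≠ x*_out}`,
`B_in = min{0, ½[⟨θ^λ_v, x*⟩ + ⟨θ^λ_v, (1, y*_in, x*_out)⟩]}` (the state `(1, y*_in, x*_out)`
lies in `X_v`), and `μ` defined on the incoming edges of `v` as stated (all other components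
zero), we have `D(λ) ≤ D(λ + μ)`. -/
theorem backward_transition_update_monotone {Vdet Vconf : Type*} [Fintype Vdet]
    [DecidableEq Vdet] [Fintype Vconf] [DecidableEq Vconf] (T : Tracking Vdet Vconf)
    (θ : Cost Vdet Vconf) (l : Repa Vdet Vconf) (v : Vdet)
    (hIn : (T.In v).Nonempty) (hOut : (T.Out v).Nonempty)
    (xs ys : DetS Vdet)
    (hxs : xs ∈ T.XDet1 v)
    (hxs_min : ∀ s ∈ T.XDet1 v,
      detCost (T.repaCost θ l) v xs ≤ detCost (T.repaCost θ l) v s)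
    (hys : ys ∈ T.XDet1 v) (hys_in : ys.2.1 ≠ xs.2.1) (hys_out : ys.2.2 ≠ xs.2.2)
    (hys_min : ∀ s ∈ T.XDet1 v, s.2.1 ≠ xs.2.1 → s.2.2 ≠ xs.2.2 →
      detCost (T.repaCost θ l) v ys ≤ detCost (T.repaCost θ l) v s)
    (Bin : ℝ)
    (hBin : Bin = min 0 ((detCost (T.repaCost θ l) v xs
      + detCost (T.repaCost θ l) v (true, ys.2.1, xs.2.2)) / 2))
    (μ : Repa Vdet Vconf)
    (hμconf : μ.2.2 = 0)
    (hμmove : ∀ m : Vdet × Vdet, μ.1 m =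
      if Sum.inl m ∈ T.In v then
        -T.minInOn (T.repaCost θ l) v (Sum.inl m) + Bin
      else 0)
    (hμdiv : ∀ d : Vdet × Vdet × Vdet, μ.2.1 d =
      ((if Sum.inr d ∈ T.In v ∧ d.2.1 = v then
          -T.minInOn (T.repaCost θ l) v (Sum.inr d) + Bin
        else 0),
       (if Sum.inr d ∈ T.In v ∧ d.2.2 = v then
          -T.minInOn (T.repaCost θ l) v (Sum.inr d) + Bin
        else 0))) :
    ((true, ys.2.1, xs.2.2) : DetS Vdet) ∈ T.XDet v ∧ T.D θ l ≤ T.D θ (l + μ) := by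
  classical
  set θ0 := T.repaCost θ l with hθ0def
  set θ1 := T.repaCost θ (l + μ) with hθ1def
  -- basic facts about xs and ys
  obtain ⟨hxsX, hxs1⟩ := (mem_XDet1_iff T v xs).mp hxs
  obtain ⟨hysX, hys1⟩ := (mem_XDet1_iff T v ys).mp hys
  obtain ⟨hxsIn, hxsOut, hxsC1, hxsC2⟩ := (mem_XDet_iff T v xs).mp hxsX
  obtain ⟨hysIn, hysOut, hysC1, hysC2⟩ := (mem_XDet_iff T v ys).mp hysX
  replace hxsC1 : xs.2.1.card ≤ 1 := by simpa [hxs1] using hxsC1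
  replace hxsC2 : xs.2.2.card ≤ 1 := by simpa [hxs1] using hxsC2
  replace hysC1 : ys.2.1.card ≤ 1 := by simpa [hys1] using hysC1
  replace hysC2 : ys.2.2.card ≤ 1 := by simpa [hys1] using hysC2
  have hzX : ((true, ys.2.1, xs.2.2) : DetS Vdet) ∈ T.XDet v :=
    (mem_XDet_iff T v _).mpr ⟨hysIn, hxsOut, by simpa using hysC1, by simpa using hxsC2⟩
  refine ⟨hzX, ?_⟩
  have hzX1 : ((true, ys.2.1, xs.2.2) : DetS Vdet) ∈ T.XDet1 v :=
    (mem_XDet1_iff T v _).mpr ⟨hzX, rfl⟩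
  have hwX1 : ((true, xs.2.1, ys.2.2) : DetS Vdet) ∈ T.XDet1 v :=
    (mem_XDet1_iff T v _).mpr ⟨(mem_XDet_iff T v _).mpr
      ⟨hxsIn, hysOut, by simpa using hxsC1, by simpa using hysC2⟩, rfl⟩
  -- cost abbreviations
  have hxs_pair : xs = (true, xs.2.1, xs.2.2) := by
    rw [← hxs1]
  have hys_pair : ys = (true, ys.2.1, ys.2.2) := by
    rw [← hys1]
  set cxs := detCost θ0 v xs with hcxs
  set cys := detCost θ0 v ys with hcys
  set cz := detCost θ0 v (true, ys.2.1, xs.2.2) with hcz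
  set cw := detCost θ0 v (true, xs.2.1, ys.2.2) with hcw
  have hadd : cz + cw = cxs + cys := by
    rw [hcz, hcw, hcxs, hcys, hxs_pair, hys_pair]
    simp only [detCost_true]
    ring
  have F1 : cxs ≤ cys := hxs_min ys hys
  have Fw : cxs ≤ cw := hxs_min _ hwX1
  have Fz : cxs ≤ cz := hxs_min _ hzX1
  have F2 : cz ≤ cys := by linarith
  have hBin0 : Bin ≤ 0 := by rw [hBin]; exact min_le_left _ _
  have hBinavg : Bin ≤ (cxs + cz) / 2 := by rw [hBin]; exact min_le_right _ _
  have hBinz : Bin ≤ cz := by linarith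
  have hBinys : Bin ≤ cys := by linarith
  -- min-marginal facts
  have hMle : ∀ e ∈ T.In v, ∀ s ∈ T.XDet v, e ∈ s.2.1 →
      T.minInOn θ0 v e ≤ detCost θ0 v s := by
    intro e he s hs hes
    rw [Tracking.minInOn, dif_pos he]
    exact Finset.inf'_le _ (Finset.mem_filter.mpr ⟨hs, hes⟩)
  have hXDetIn_mem : ∀ e ∈ T.In v, ∀ m ∈ T.XDetIn v e,
      m ∈ T.XDet1 v ∧ m.2.1 = {e} := by
    intro e he m hm
    have hmX : m ∈ T.XDet v := (Finset.mem_filter.mp hm).1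
    have hem : e ∈ m.2.1 := (Finset.mem_filter.mp hm).2
    obtain ⟨hmIn, hmOut, hmC1, hmC2⟩ := (mem_XDet_iff T v m).mp hmX
    have hm1 : m.1 = true := by
      by_contra h
      rw [Bool.not_eq_true] at h
      rw [h] at hmC1
      simp only [Bool.false_eq_true, if_false, Nat.le_zero, Finset.card_eq_zero] at hmC1
      rw [hmC1] at hem
      exact absurd hem (Finset.notMem_empty e)
    have hc1 : m.2.1.card ≤ 1 := by simpa [hm1] using hmC1
    exact ⟨(mem_XDet1_iff T v m).mpr ⟨hmX, hm1⟩,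
      Finset.eq_singleton_iff_unique_mem.mpr
        ⟨hem, fun b hb => Finset.card_le_one.mp hc1 b hb e hem⟩⟩
  have hKey : ∀ e ∈ T.In v, ({e} : Finset (Edge Vdet)) ≠ xs.2.1 →
      Bin ≤ T.minInOn θ0 v e := by
    intro e he hne
    rw [Tracking.minInOn, dif_pos he]
    obtain ⟨m, hm, hEq⟩ := Finset.exists_mem_eq_inf' (T.XDetIn_nonempty v e he) (detCost θ0 v)
    rw [hEq]
    obtain ⟨hm1mem, hmin_eq⟩ := hXDetIn_mem e he m hm
    obtain ⟨hmX, hm1⟩ := (mem_XDet1_iff T v m).mp hm1mem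
    obtain ⟨hmIn, hmOut, hmC1, hmC2⟩ := (mem_XDet_iff T v m).mp hmX
    by_cases hout : m.2.2 = xs.2.2
    · -- compare with (true, {e}, ys.2.2) and z
      have hm'X1 : ((true, {e}, ys.2.2) : DetS Vdet) ∈ T.XDet1 v :=
        (mem_XDet1_iff T v _).mpr ⟨(mem_XDet_iff T v _).mpr
          ⟨Finset.singleton_subset_iff.mpr he, hysOut, by simp, by simpa using hysC2⟩, rfl⟩
      have h1 : cys ≤ detCost θ0 v (true, {e}, ys.2.2) :=
        hys_min _ hm'X1 hne hys_out
      have hm_pair : m = (true, ({e} : Finset (Edge Vdet)), xs.2.2) := by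
        rw [← hm1, ← hmin_eq, ← hout]
      rw [hm_pair]
      rw [hcys, hys_pair] at h1
      rw [hcz] at hBinz F2
      rw [hcys, hys_pair] at F2
      simp only [detCost_true] at h1 hBinz F2 ⊢
      linarith
    · have h1 : cys ≤ detCost θ0 v m :=
        hys_min m hm1mem (by rw [hmin_eq]; exact hne) hout
      linarith
  -- the per-edge dual increment
  set g : Edge Vdet → ℝ :=
    fun e => if e ∈ T.In v then Bin - T.minInOn θ0 v e else 0 with hgdef
  have hg_eval : ∀ e, g e = if e ∈ T.In v then Bin - T.minInOn θ0 v e else 0 :=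
    fun e => by rw [hgdef]
  have hmuIn : ∀ u : Vdet, ∀ e ∈ T.In u, muIn μ u e = if u = v then g e else 0 := by
    rintro u (m | d) he
    · rw [mem_In_inl] at he
      show μ.1 m = _
      rw [hμmove m]
      by_cases huv : u = v
      · have hin : Sum.inl m ∈ T.In v := (mem_In_inl T v m).mpr ⟨he.1, he.2.trans huv⟩
        rw [if_pos huv, hg_eval, if_pos hin, if_pos hin]
        ring
      · have hnin : Sum.inl m ∉ T.In v :=
          fun hh => huv (he.2.symm.trans ((mem_In_inl T v m).mp hh).2)
        rw [if_neg huv, if_neg hnin]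
    · rw [mem_In_inr] at he
      show (if d.2.1 = u then (μ.2.1 d).1 else 0) + (if d.2.2 = u then (μ.2.1 d).2 else 0) = _
      rw [hμdiv d]
      obtain ⟨h1, h2, h3⟩ := T.div_ne d he.1
      by_cases huv : u = v
      · have he2v : d.2.1 = v ∨ d.2.2 = v := by
          rcases he.2 with h | h
          exacts [Or.inl (h.trans huv), Or.inr (h.trans huv)]
        have hin : Sum.inr d ∈ T.In v := (mem_In_inr T v d).mpr ⟨he.1, he2v⟩
        rw [if_pos huv, hg_eval, if_pos hin]
        rcases he2v with h | h
        · have nc2 : ¬(Sum.inr d ∈ T.In v ∧ d.2.2 = v) := fun hh => h3 (h.trans hh.2.symm)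
          have pc1 : Sum.inr d ∈ T.In v ∧ d.2.1 = v := ⟨hin, h⟩
          rw [if_pos (h.trans huv.symm), if_pos pc1, if_neg nc2, ite_self]
          ring
        · have nc1 : ¬(Sum.inr d ∈ T.In v ∧ d.2.1 = v) := fun hh => h3 (hh.2.trans h.symm)
          have pc2 : Sum.inr d ∈ T.In v ∧ d.2.2 = v := ⟨hin, h⟩
          rw [if_pos (h.trans huv.symm), if_pos pc2, if_neg nc1, ite_self]
          ring
      · have z1 : (if d.2.1 = u then (if Sum.inr d ∈ T.In v ∧ d.2.1 = v then
            -T.minInOn θ0 v (Sum.inr d) + Bin else 0) else 0) = 0 := by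
          split_ifs with ha hb
          · exact absurd (ha.symm.trans hb.2) huv
          · rfl
          · rfl
        have z2 : (if d.2.2 = u then (if Sum.inr d ∈ T.In v ∧ d.2.2 = v then
            -T.minInOn θ0 v (Sum.inr d) + Bin else 0) else 0) = 0 := by
          split_ifs with ha hb
          · exact absurd (ha.symm.trans hb.2) huv
          · rfl
          · rfl
        rw [if_neg huv, z1, z2, add_zero]
  have hmuOut : ∀ u : Vdet, ∀ e ∈ T.Out u, muOut μ e = g e := by
    rintro u (m | d) he
    · show μ.1 m = _
      rw [hμmove m, hg_eval]
      split_ifs with h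
      · ring
      · rfl
    · rw [mem_Out_inr] at he
      show (μ.2.1 d).1 + (μ.2.1 d).2 = _
      rw [hμdiv d, hg_eval]
      obtain ⟨h1, h2, h3⟩ := T.div_ne d he.1
      by_cases hin : Sum.inr d ∈ T.In v
      · rw [if_pos hin]
        rcases (mem_In_inr T v d).mp hin with ⟨-, hc | hc⟩
        · have pc1 : Sum.inr d ∈ T.In v ∧ d.2.1 = v := ⟨hin, hc⟩
          have nc2 : ¬(Sum.inr d ∈ T.In v ∧ d.2.2 = v) := fun hh => h3 (hc.trans hh.2.symm)
          rw [if_pos pc1, if_neg nc2, add_zero]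
          ring
        · have pc2 : Sum.inr d ∈ T.In v ∧ d.2.2 = v := ⟨hin, hc⟩
          have nc1 : ¬(Sum.inr d ∈ T.In v ∧ d.2.1 = v) := fun hh => h3 (hh.2.trans hc.symm)
          rw [if_pos pc2, if_neg nc1, zero_add]
          ring
      · have nc1 : ¬(Sum.inr d ∈ T.In v ∧ d.2.1 = v) := fun hh => hin hh.1
        have nc2 : ¬(Sum.inr d ∈ T.In v ∧ d.2.2 = v) := fun hh => hin hh.1
        rw [if_neg hin, if_neg nc1, if_neg nc2, add_zero]
  have hgOutv : ∀ e ∈ T.Out v, g e = 0 := by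
    intro e he
    rw [hg_eval e, if_neg (fun hin => not_out_of_in T v e hin he)]
  -- cost-change identities
  have Lv : ∀ s ∈ T.XDet v, detCost θ1 v s = detCost θ0 v s + ∑ e ∈ s.2.1, g e := by
    intro s hs
    obtain ⟨hsIn, hsOut, -, -⟩ := (mem_XDet_iff T v s).mp hs
    rw [hθ1def, hθ0def, detCost_repa_add T θ l μ hμconf]
    have h1 : ∑ e ∈ s.2.1, muIn μ v e = ∑ e ∈ s.2.1, g e :=
      Finset.sum_congr rfl fun e hes => by rw [hmuIn v e (hsIn hes), if_pos rfl]
    have h2 : ∑ e ∈ s.2.2, muOut μ e = 0 :=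
      Finset.sum_eq_zero fun e hes => by
        rw [hmuOut v e (hsOut hes)]; exact hgOutv e (hsOut hes)
    rw [h1, h2, sub_zero]
  have Lu : ∀ u : Vdet, u ≠ v → ∀ s ∈ T.XDet u,
      detCost θ1 u s = detCost θ0 u s - ∑ e ∈ s.2.2, g e := by
    intro u huv s hs
    obtain ⟨hsIn, hsOut, -, -⟩ := (mem_XDet_iff T u s).mp hs
    rw [hθ1def, hθ0def, detCost_repa_add T θ l μ hμconf]
    have h1 : ∑ e ∈ s.2.1, muIn μ u e = 0 :=
      Finset.sum_eq_zero fun e hes => by rw [hmuIn u e (hsIn hes), if_neg huv]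
    have h2 : ∑ e ∈ s.2.2, muOut μ e = ∑ e ∈ s.2.2, g e :=
      Finset.sum_congr rfl fun e hes => hmuOut u e (hsOut hes)
    rw [h1, h2, add_zero]
  -- card facts for states
  have hcard : ∀ (u : Vdet) (s : DetS Vdet), s ∈ T.XDet u →
      s.2.1.card ≤ 1 ∧ s.2.2.card ≤ 1 := by
    intro u s hs
    obtain ⟨-, -, h1, h2⟩ := (mem_XDet_iff T u s).mp hs
    constructor
    · exact le_trans h1 (by split_ifs <;> norm_num)
    · exact le_trans h2 (by split_ifs <;> norm_num)
  have hinf0_le_Bin : (T.XDet v).inf' (T.XDet_nonempty v) (detCost θ0 v) ≤ Bin := by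
    rw [hBin]
    refine le_min ?_ ?_
    · have h := Finset.inf'_le (detCost θ0 v) (T.zero_mem_XDet v)
      exact h.trans (by simp [detCost])
    · have h1 := Finset.inf'_le (detCost θ0 v) hxsX
      have h2 := Finset.inf'_le (detCost θ0 v) hzX
      rw [← hcxs] at h1
      rw [← hcz] at h2
      linarith
  -- main detection-sum inequality
  have hdet : ∑ u, (T.XDet u).inf' (T.XDet_nonempty u) (detCost θ0 u)
      ≤ ∑ u, (T.XDet u).inf' (T.XDet_nonempty u) (detCost θ1 u) := by
    by_cases hcase : ∀ e ∈ T.In v, Bin ≤ T.minInOn θ0 v e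
    · refine Finset.sum_le_sum fun u _ => Finset.le_inf' _ _ fun s hs => ?_
      by_cases huv : u = v
      · subst huv
        rw [Lv s hs]
        obtain ⟨hsIn, -, -, -⟩ := (mem_XDet_iff T u s).mp hs
        rcases card_le_one_cases s.2.1 (hcard u s hs).1 with h0 | ⟨e, he⟩
        · rw [h0, Finset.sum_empty, add_zero]
          exact Finset.inf'_le _ hs
        · have hes : e ∈ s.2.1 := by rw [he]; exact Finset.mem_singleton_self e
          have heIn : e ∈ T.In u := hsIn hes
          have h1 := hMle e heIn s hs hes
          rw [he, Finset.sum_singleton, hg_eval, if_pos heIn]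
          linarith
      · rw [Lu u huv s hs]
        have hinfle := Finset.inf'_le (detCost θ0 u) hs
        obtain ⟨-, hsOut, -, -⟩ := (mem_XDet_iff T u s).mp hs
        have hsum : ∑ e ∈ s.2.2, g e ≤ 0 := by
          refine Finset.sum_nonpos fun e hes => ?_
          rw [hg_eval]
          split_ifs with h
          · linarith [hcase e h]
          · exact le_refl 0
        linarith
    · push_neg at hcase
      obtain ⟨estar, heInv, hMlt⟩ := hcase
      have hxs_in_eq : xs.2.1 = {estar} := by
        by_contra hne
        exact absurd (hKey estar heInv (fun h => hne h.symm)) (not_le.mpr hMlt)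
      have huniq : ∀ e ∈ T.In v, e ≠ estar → Bin ≤ T.minInOn θ0 v e := fun e he hne =>
        hKey e he (by rw [hxs_in_eq]; exact fun h => hne (Finset.singleton_inj.mp h))
      set ustar : Vdet := Sum.elim (fun m => m.1) (fun d => d.1) estar with hustar
      have hustar_out : ∀ u : Vdet, estar ∈ T.Out u → u = ustar := by
        intro u hu
        rcases estar with m | d
        · exact ((mem_Out_inl T u m).mp hu).2.symm
        · exact ((mem_Out_inr T u d).mp hu).2.symm
      have hustar_ne_v : ustar ≠ v := by
        clear hustar_out hxs_in_eq huniq hMlt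
        rcases estar with m | d
        · obtain ⟨hm, h2⟩ := (mem_In_inl T v m).mp heInv
          exact fun h => T.move_ne m hm (h.trans h2.symm)
        · obtain ⟨hd, h2⟩ := (mem_In_inr T v d).mp heInv
          obtain ⟨n1, n2, -⟩ := T.div_ne d hd
          rcases h2 with h | h
          · exact fun hh => n1 (hh.trans h.symm)
          · exact fun hh => n2 (hh.trans h.symm)
      have key : ∀ u : Vdet,
          (T.XDet u).inf' (T.XDet_nonempty u) (detCost θ0 u)
            + ((if u = v then Bin - T.minInOn θ0 v estar else 0)
              + (if u = ustar then T.minInOn θ0 v estar - Bin else 0))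
            ≤ (T.XDet u).inf' (T.XDet_nonempty u) (detCost θ1 u) := by
        intro u
        by_cases huv : u = v
        · subst huv
          rw [if_pos rfl, if_neg (fun h => hustar_ne_v h.symm)]
          have hle : (T.XDet u).inf' (T.XDet_nonempty u) (detCost θ0 u)
              ≤ T.minInOn θ0 u estar := by
            obtain ⟨m, hm, hEq⟩ :=
              Finset.exists_mem_eq_inf' (T.XDetIn_nonempty u estar heInv) (detCost θ0 u)
            rw [Tracking.minInOn, dif_pos heInv, hEq]
            exact Finset.inf'_le _ ((Finset.mem_filter.mp hm).1)
          have hBinle : Bin ≤ (T.XDet u).inf' (T.XDet_nonempty u) (detCost θ1 u) := by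
            refine Finset.le_inf' _ _ fun s hs => ?_
            rw [Lv s hs]
            obtain ⟨hsIn, hsOut, hsC1, hsC2⟩ := (mem_XDet_iff T u s).mp hs
            rcases card_le_one_cases s.2.1 (hcard u s hs).1 with h0 | ⟨e, he⟩
            · rw [h0, Finset.sum_empty, add_zero]
              cases hs1 : s.1 with
              | false =>
                have hout0 : s.2.2 = ∅ := by
                  rw [hs1] at hsC2
                  simpa using hsC2
                have hs_eq : s = (false, ∅, ∅) := by
                  have hh : s = (s.1, s.2.1, s.2.2) := rfl
                  rw [hs1, h0, hout0] at hh
                  exact hh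
                rw [hs_eq]
                simpa [detCost] using hBin0
              | true =>
                have hs_eq : s = (true, (∅ : Finset (Edge Vdet)), s.2.2) := by
                  have hh : s = (s.1, s.2.1, s.2.2) := rfl
                  rw [hs1, h0] at hh
                  exact hh
                have hbC : s.2.2.card ≤ 1 := (hcard u s hs).2
                have hmem1 : ((true, xs.2.1, s.2.2) : DetS Vdet) ∈ T.XDet1 u :=
                  (mem_XDet1_iff T u _).mpr ⟨(mem_XDet_iff T u _).mpr
                    ⟨hxsIn, hsOut, by simpa using hxsC1, by simpa using hbC⟩, rfl⟩
                have hmem2 : ((true, ys.2.1, s.2.2) : DetS Vdet) ∈ T.XDet1 u :=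
                  (mem_XDet1_iff T u _).mpr ⟨(mem_XDet_iff T u _).mpr
                    ⟨hysIn, hsOut, by simpa using hysC1, by simpa using hbC⟩, rfl⟩
                have hmem3 : ((true, (∅ : Finset (Edge Vdet)), xs.2.2) : DetS Vdet)
                    ∈ T.XDet1 u :=
                  (mem_XDet1_iff T u _).mpr ⟨(mem_XDet_iff T u _).mpr
                    ⟨Finset.empty_subset _, hxsOut, by simp, by simpa using hxsC2⟩, rfl⟩
                have hmem4 : ((true, (∅ : Finset (Edge Vdet)), ys.2.2) : DetS Vdet)
                    ∈ T.XDet1 u :=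
                  (mem_XDet1_iff T u _).mpr ⟨(mem_XDet_iff T u _).mpr
                    ⟨Finset.empty_subset _, hysOut, by simp, by simpa using hysC2⟩, rfl⟩
                have hxb : cxs ≤ detCost θ0 u (true, xs.2.1, s.2.2) := hxs_min _ hmem1
                have hyb : cz ≤ detCost θ0 u (true, ys.2.1, s.2.2) := by
                  by_cases hbx : s.2.2 = xs.2.2
                  · rw [hcz, hbx]
                  · exact le_trans F2 (hys_min _ hmem2 hys_in hbx)
                have hx0 : cxs ≤ detCost θ0 u (true, ∅, xs.2.2) := hxs_min _ hmem3
                have hy0 : cys ≤ detCost θ0 u (true, ∅, ys.2.2) := by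
                  refine hys_min _ hmem4 ?_ hys_out
                  rw [hxs_in_eq]
                  exact fun h => Finset.singleton_ne_empty estar h.symm
                have Exs : cxs = θ0.det u + ∑ e ∈ xs.2.1, θ0.inn u e
                    + ∑ e ∈ xs.2.2, θ0.out u e := by
                  rw [hcxs, hxs_pair]; exact detCost_true θ0 u _ _
                have Eys : cys = θ0.det u + ∑ e ∈ ys.2.1, θ0.inn u e
                    + ∑ e ∈ ys.2.2, θ0.out u e := by
                  rw [hcys, hys_pair]; exact detCost_true θ0 u _ _
                have Ez : cz = θ0.det u + ∑ e ∈ ys.2.1, θ0.inn u e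
                    + ∑ e ∈ xs.2.2, θ0.out u e := by
                  rw [hcz]; exact detCost_true θ0 u _ _
                rw [hs_eq]
                simp only [detCost_true, Finset.sum_empty, add_zero, zero_add] at hxb hyb hx0 hy0 ⊢
                linarith
            · have hes : e ∈ s.2.1 := by rw [he]; exact Finset.mem_singleton_self e
              have heIn : e ∈ T.In u := hsIn hes
              have h1 := hMle e heIn s hs hes
              rw [he, Finset.sum_singleton, hg_eval, if_pos heIn]
              linarith
          linarith
        · rw [if_neg huv]
          refine Finset.le_inf' _ _ fun s hs => ?_
          rw [Lu u huv s hs]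
          have hinfle := Finset.inf'_le (detCost θ0 u) hs
          obtain ⟨-, hsOut, -, -⟩ := (mem_XDet_iff T u s).mp hs
          have hiu : (if u = ustar then T.minInOn θ0 v estar - Bin else 0) ≤ 0 := by
            split_ifs
            · linarith
            · exact le_refl 0
          rcases card_le_one_cases s.2.2 (hcard u s hs).2 with h0 | ⟨e, he⟩
          · rw [h0, Finset.sum_empty, sub_zero]
            linarith
          · have hes : e ∈ s.2.2 := by rw [he]; exact Finset.mem_singleton_self e
            have heOut : e ∈ T.Out u := hsOut hes
            rw [he, Finset.sum_singleton]
            by_cases hee : e = estar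
            · have huu : u = ustar := hustar_out u (hee ▸ heOut)
              rw [if_pos huu, hg_eval, hee, if_pos heInv]
              linarith
            · have hge : g e ≤ 0 := by
                rw [hg_eval]
                split_ifs with h
                · linarith [huniq e h hee]
                · exact le_refl 0
              linarith
      calc ∑ u, (T.XDet u).inf' (T.XDet_nonempty u) (detCost θ0 u)
          = ∑ u, ((T.XDet u).inf' (T.XDet_nonempty u) (detCost θ0 u)
            + ((if u = v then Bin - T.minInOn θ0 v estar else 0)
              + (if u = ustar then T.minInOn θ0 v estar - Bin else 0))) := by
            rw [Finset.sum_add_distrib, Finset.sum_add_distrib,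
              Finset.sum_ite_eq' Finset.univ v, Finset.sum_ite_eq' Finset.univ ustar,
              if_pos (Finset.mem_univ v), if_pos (Finset.mem_univ ustar)]
            ring
        _ ≤ ∑ u, (T.XDet u).inf' (T.XDet_nonempty u) (detCost θ1 u) :=
            Finset.sum_le_sum fun u _ => key u
  -- conclude
  have hconfsum : ∑ c, (T.XConf c).inf' (T.XConf_nonempty c) (confCost θ1 c)
      = ∑ c, (T.XConf c).inf' (T.XConf_nonempty c) (confCost θ0 c) :=
    Finset.sum_congr rfl fun c _ => Finset.inf'_congr (T.XConf_nonempty c) rfl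
      (fun s _ => confCost_repa_add T θ l μ hμconf c s)
  simp only [Tracking.D]
  rw [← hθ0def, ← hθ1def, hconfsum]
  exact add_le_add hdet le_rfl
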